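/- arXiv:2010.01261 — 2 statements merged into one kernel-verified Lean document; each statement's English description precedes it below -/
import Mathlib

section
/- Let A = (A_{ij}) ∈ Mat_n(ℂ), let C₁,…,C_n denote the columns of A, and fix 1 ≤ k ≤ n. Let H_k := span{C_i : i ≠ k}, let u be the k-th row of A with its k-th entry removed, v the k-th column C_k with its k-th entry removed, and B the (n−1)×(n−1) submatrix of A formed by removing the k-th row and k-th column. If B is invertible, then dist(C_k, H_k) ≥ |A_{kk} − uB^{−1}v| / √(1 + ‖uB^{−1}‖²). -/
open Matrix
open scoped BigOperators

/-- **Distance problem via bilinear forms** (Lemma 4.14). Let `C₁,…,C_n` be the columns of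
`A`, fix `k`, let `H_k` be the span of the other columns, let `u` be the `k`-th row of `A`
with its `k`-th entry removed, `v` the `k`-th column of `A` with its `k`-th entry removed,
and `B` the submatrix of `A` obtained by removing the `k`-th row and column. If `B` is
invertible, then `dist(C_k, H_k) ≥ |A_{kk} - u B⁻¹ v| / √(1 + ‖u B⁻¹‖²)`. -/
theorem dist_ge_bilinear_form {n : ℕ} (A : Matrix (Fin n) (Fin n) ℂ) (k : Fin n)
    (B : Matrix {j : Fin n // j ≠ k} {j : Fin n // j ≠ k} ℂ)
    (hB : ∀ i j : {j : Fin n // j ≠ k}, B i j = A i.1 j.1)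
    (hBunit : IsUnit B)
    (u v : {j : Fin n // j ≠ k} → ℂ)
    (hu : ∀ j : {j : Fin n // j ≠ k}, u j = A k j.1)
    (hv : ∀ j : {j : Fin n // j ≠ k}, v j = A j.1 k) :
    Metric.infDist
        ((WithLp.equiv 2 (Fin n → ℂ)).symm (fun i => A i k))
        (Submodule.span ℂ
          {w | ∃ i, i ≠ k ∧ w = (WithLp.equiv 2 (Fin n → ℂ)).symm (fun i' => A i' i)} :
            Set (EuclideanSpace ℂ (Fin n))) ≥
      ‖A k k - (Matrix.vecMul u B⁻¹) ⬝ᵥ v‖ /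
        Real.sqrt (1 + ‖(WithLp.equiv 2 ({j : Fin n // j ≠ k} → ℂ)).symm
            (Matrix.vecMul u B⁻¹)‖ ^ 2) := by
  classical
  have hdet : IsUnit B.det := (Matrix.isUnit_iff_isUnit_det B).mp hBunit
  set u' : {j : Fin n // j ≠ k} → ℂ := Matrix.vecMul u B⁻¹ with hu'
  set w : EuclideanSpace ℂ (Fin n) :=
    (WithLp.equiv 2 (Fin n → ℂ)).symm
      (fun i => if h : i ≠ k then -(starRingEnd ℂ) (u' ⟨i, h⟩) else 1) with hw
  -- sum splitting
  have hsplit : ∀ f : Fin n → ℂ, ∑ i, f i = f k + ∑ j : {j : Fin n // j ≠ k}, f j.1 := by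
    intro f
    rw [← Finset.sum_erase_add Finset.univ f (Finset.mem_univ k), add_comm]
    congr 1
    exact Finset.sum_subtype (p := fun i => i ≠ k) (Finset.univ.erase k)
      (by simp [Finset.mem_erase]) f
  have hwval : ∀ i : Fin n, w i = if h : i ≠ k then -(starRingEnd ℂ) (u' ⟨i, h⟩) else 1 := by
    intro i; rw [hw]; rfl
  have hinner : ∀ z : EuclideanSpace ℂ (Fin n),
      inner ℂ w z = z k - ∑ j : {j : Fin n // j ≠ k}, u' j * z j.1 := by
    intro z
    have : (inner ℂ w z : ℂ) = ∑ i, (starRingEnd ℂ) (w i) * z i := by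
      simp [PiLp.inner_apply, RCLike.inner_apply, mul_comm]
    rw [this, hsplit (fun i => (starRingEnd ℂ) (w i) * z i)]
    have h1 : (starRingEnd ℂ) (w k) * z k = z k := by simp [hwval]
    have h2 : ∀ j : {j : Fin n // j ≠ k},
        (starRingEnd ℂ) (w j.1) * z j.1 = -(u' j * z j.1) := by
      intro j
      rw [hwval j.1]
      rw [dif_pos j.2]
      simp
    rw [h1]
    rw [Finset.sum_congr rfl (fun j _ => h2 j), Finset.sum_neg_distrib]
    ring
  -- vecMul u' B = u
  have hvm : Matrix.vecMul u' B = u := by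
    rw [hu', Matrix.vecMul_vecMul, Matrix.nonsing_inv_mul B hdet, Matrix.vecMul_one]
  -- vanishing on generators and span
  have hgen : ∀ y ∈ (Submodule.span ℂ
      {w | ∃ i, i ≠ k ∧ w = (WithLp.equiv 2 (Fin n → ℂ)).symm (fun i' => A i' i)} :
        Submodule ℂ (EuclideanSpace ℂ (Fin n))), (inner ℂ w y : ℂ) = 0 := by
    intro y hy
    induction hy using Submodule.span_induction with
    | mem x hx =>
        obtain ⟨i, hik, rfl⟩ := hx
        rw [hinner]
        have hz : ∀ i' : Fin n,
            ((WithLp.equiv 2 (Fin n → ℂ)).symm (fun i' => A i' i) : EuclideanSpace ℂ (Fin n)) i'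
              = A i' i := fun _ => rfl
        simp only [hz]
        have : ∑ j : {j : Fin n // j ≠ k}, u' j * A j.1 i = u ⟨i, hik⟩ := by
          have := congrFun hvm ⟨i, hik⟩
          rw [← this]
          simp [Matrix.vecMul, dotProduct, hB]
        rw [this, hu ⟨i, hik⟩]
        simp
    | zero => simp
    | add x y _ _ hx hy => rw [inner_add_right, hx, hy, add_zero]
    | smul c x _ hx => rw [inner_smul_right, hx, mul_zero]
  -- norm of w
  have hnormsq : ‖w‖ = Real.sqrt (1 + ‖(WithLp.equiv 2 ({j : Fin n // j ≠ k} → ℂ)).symm u'‖ ^ 2) := by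
    have hwnorm : ‖w‖ = Real.sqrt (∑ i, ‖w i‖ ^ 2) := EuclideanSpace.norm_eq w
    have hunorm : ‖(WithLp.equiv 2 ({j : Fin n // j ≠ k} → ℂ)).symm u'‖ ^ 2
        = ∑ j : {j : Fin n // j ≠ k}, ‖u' j‖ ^ 2 := by
      rw [EuclideanSpace.norm_eq]
      rw [Real.sq_sqrt (Finset.sum_nonneg fun _ _ => sq_nonneg _)]
      rfl
    rw [hwnorm, hunorm]
    congr 1
    have hsplitR : ∑ i, ‖w i‖ ^ 2 = ‖w k‖ ^ 2 + ∑ j : {j : Fin n // j ≠ k}, ‖w j.1‖ ^ 2 := by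
      rw [← Finset.sum_erase_add Finset.univ _ (Finset.mem_univ k), add_comm]
      congr 1
      exact Finset.sum_subtype (p := fun i => i ≠ k) (Finset.univ.erase k)
        (by simp [Finset.mem_erase]) _
    rw [hsplitR]
    congr 1
    · simp [hwval]
    · refine Finset.sum_congr rfl fun j _ => ?_
      rw [hwval j.1, dif_pos j.2]
      simp
  -- final assembly
  have hwpos : 0 < ‖w‖ := by
    rw [hnormsq]
    positivity
  refine le_of_not_gt fun hlt => ?_
  obtain ⟨y, hy, hdy⟩ := (Metric.infDist_lt_iff ⟨0, Submodule.zero_mem _⟩).mp hlt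
  have h0 : (inner ℂ w y : ℂ) = 0 := hgen y hy
  have hCk : (inner ℂ w ((WithLp.equiv 2 (Fin n → ℂ)).symm (fun i => A i k) - y) : ℂ)
      = A k k - Matrix.vecMul u B⁻¹ ⬝ᵥ v := by
    rw [inner_sub_right, h0, sub_zero, hinner]
    have hz : ∀ i : Fin n,
        ((WithLp.equiv 2 (Fin n → ℂ)).symm (fun i => A i k) : EuclideanSpace ℂ (Fin n)) i
          = A i k := fun _ => rfl
    simp only [hz, ← hu']
    congr 1
    simp [dotProduct, hv]
  have hCS := norm_inner_le_norm (𝕜 := ℂ) w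
    ((WithLp.equiv 2 (Fin n → ℂ)).symm (fun i => A i k) - y)
  rw [hCk] at hCS
  have key : ‖A k k - Matrix.vecMul u B⁻¹ ⬝ᵥ v‖ /
      Real.sqrt (1 + ‖(WithLp.equiv 2 ({j : Fin n // j ≠ k} → ℂ)).symm u'‖ ^ 2)
      ≤ dist ((WithLp.equiv 2 (Fin n → ℂ)).symm (fun i => A i k)) y := by
    rw [div_le_iff₀ (by rw [← hnormsq]; exact hwpos)]
    rw [← hnormsq, dist_eq_norm, mul_comm]
    exact hCS
  exact absurd hdy (not_lt.mpr key)
end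

section
/- Let M ∈ Mat_n(ℂ) be deterministic, and let x = (x_i)_{i=1}^n, y = (y_i)_{i=1}^n be random vectors in ℂⁿ such that {(x_i, y_i) : 1 ≤ i ≤ n} is a collection of independent random tuples. Let (x′, y′) be an independent copy of (x, y). Then for every subset π ⊆ [n] and every t ≥ 0, there exists a random variable z₀ whose value is determined by M_{π^c×π^c}, x_{π^c}, y_{π^c}, x′_{π^c}, y′_{π^c} such that sup_{z ∈ ℂ} P( |xᵀMy − z| ≤ t )² ≤ P( |x_πᵀ M_{π×π^c}(y_{π^c} − y′_{π^c}) + (x_{π^c} − x′_{π^c})ᵀ M_{π^c×π} y_π + z₀| ≤ 2t ). -/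
open MeasureTheory ProbabilityTheory Matrix
open scoped BigOperators ENNReal

theorem sq_lintegral_le' {α : Type*} [MeasurableSpace α] (μ : Measure α) [IsProbabilityMeasure μ]
    (g : α → ℝ≥0∞) (hg : Measurable g) :
    (∫⁻ a, g a ∂μ) ^ 2 ≤ ∫⁻ a, (g a) ^ 2 ∂μ := by
  have h := ENNReal.lintegral_mul_le_Lp_mul_Lq μ (p := 2) (q := 2)
    (by constructor <;> norm_num) hg.aemeasurable
    (g := fun _ => 1) measurable_const.aemeasurable
  simp only [Pi.mul_apply, mul_one, ENNReal.one_rpow, lintegral_const, measure_univ,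
    ENNReal.one_rpow, mul_one, one_mul] at h
  calc (∫⁻ a, g a ∂μ) ^ 2 ≤ ((∫⁻ a, g a ^ (2:ℝ) ∂μ) ^ (1/(2:ℝ))) ^ 2 := by gcongr
    _ = ∫⁻ a, g a ^ 2 ∂μ := by
        rw [← ENNReal.rpow_natCast _ 2, ← ENNReal.rpow_mul]
        norm_num

theorem key_decouple {Ω β γ : Type*} [MeasureSpace Ω] [IsProbabilityMeasure (ℙ : Measure Ω)]
    [MeasurableSpace β] [MeasurableSpace γ]
    (A : Ω → β) (B B' : Ω → γ)
    (hA : Measurable A) (hB : Measurable B) (hB' : Measurable B')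
    (h1 : IndepFun A B ℙ)
    (h2 : IndepFun (fun ω => (A ω, B ω)) B' ℙ)
    (h3 : IdentDistrib B B' ℙ ℙ)
    {E : Set (β × γ)} (hE : MeasurableSet E) :
    ℙ {ω | (A ω, B ω) ∈ E} ^ 2 ≤ ℙ ({ω | (A ω, B ω) ∈ E} ∩ {ω | (A ω, B' ω) ∈ E}) := by
  set μ := Measure.map A ℙ with hμ
  set ν := Measure.map B ℙ with hν
  have hAB : Measurable (fun ω => (A ω, B ω)) := hA.prodMk hB
  have hmapAB : Measure.map (fun ω => (A ω, B ω)) ℙ = μ.prod ν :=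
    (indepFun_iff_map_prod_eq_prod_map_map hA.aemeasurable hB.aemeasurable).1 h1
  have hνB' : Measure.map B' ℙ = ν := h3.map_eq.symm
  have hmapT : Measure.map (fun ω => ((A ω, B ω), B' ω)) ℙ = (μ.prod ν).prod ν := by
    rw [(indepFun_iff_map_prod_eq_prod_map_map hAB.aemeasurable hB'.aemeasurable).1 h2,
      hmapAB, hνB']
  have : IsProbabilityMeasure μ := Measure.isProbabilityMeasure_map hA.aemeasurable
  have : IsProbabilityMeasure ν := Measure.isProbabilityMeasure_map hB.aemeasurable
  set g : β → ℝ≥0∞ := fun a => ν (Prod.mk a ⁻¹' E) with hg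
  have hgm : Measurable g := measurable_measure_prodMk_left hE
  have hL : ℙ {ω | (A ω, B ω) ∈ E} = ∫⁻ a, g a ∂μ := by
    have : ℙ {ω | (A ω, B ω) ∈ E} = (μ.prod ν) E := by
      rw [← hmapAB, Measure.map_apply hAB hE]; rfl
    rw [this, Measure.prod_apply hE]
  have hD : MeasurableSet {p : (β × γ) × γ | p.1 ∈ E ∧ (p.1.1, p.2) ∈ E} := by
    exact (hE.preimage measurable_fst).inter
      (hE.preimage ((measurable_fst.comp measurable_fst).prodMk measurable_snd))
  have hR : ℙ ({ω | (A ω, B ω) ∈ E} ∩ {ω | (A ω, B' ω) ∈ E})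
      = ∫⁻ a, (g a) ^ 2 ∂μ := by
    have hpre : ({ω | (A ω, B ω) ∈ E} ∩ {ω | (A ω, B' ω) ∈ E})
        = (fun ω => ((A ω, B ω), B' ω)) ⁻¹' {p : (β × γ) × γ | p.1 ∈ E ∧ (p.1.1, p.2) ∈ E} := rfl
    rw [hpre, ← Measure.map_apply (hAB.prodMk hB') hD, hmapT, Measure.prod_apply hD]
    have : ∀ p : β × γ, ν (Prod.mk p ⁻¹' {q : (β × γ) × γ | q.1 ∈ E ∧ (q.1.1, q.2) ∈ E})
        = E.indicator (fun q => g q.1) p := by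
      intro p
      by_cases hp : p ∈ E
      · simp only [Set.indicator_of_mem hp]
        congr 1
        ext c
        simp [hp, Set.mem_preimage]
      · simp only [Set.indicator_of_notMem hp]
        have h0 : Prod.mk p ⁻¹' {q : (β × γ) × γ | q.1 ∈ E ∧ (q.1.1, q.2) ∈ E} = ∅ := by
          ext c; simp [hp]
        rw [h0]; simp
    have hmeas : Measurable (fun q : β × γ => g q.1) := hgm.comp measurable_fst
    rw [lintegral_congr this, lintegral_prod _ (hmeas.indicator hE).aemeasurable]
    refine lintegral_congr fun a => ?_
    have h1 : ∀ b, E.indicator (fun q : β × γ => g q.1) (a, b)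
        = (Prod.mk a ⁻¹' E).indicator (fun _ => g a) b := by
      intro b; by_cases h : (a, b) ∈ E <;> simp [h, Set.indicator]
    rw [lintegral_congr h1, lintegral_indicator (measurable_prodMk_left hE),
      setLIntegral_const]
    rw [pow_two]
  rw [hL, hR]
  exact sq_lintegral_le' μ g hgm

/-- **Decoupling lemma** (Lemma 4.15). For random vectors `x, y` with independent tuples
`(x_i, y_i)` and an independent copy `(x', y')`, for every `π ⊆ [n]` and `t ≥ 0` there is a
quantity `z₀` determined by `M_{πᶜ×πᶜ}`, `x_{πᶜ}`, `y_{πᶜ}`, `x'_{πᶜ}`, `y'_{πᶜ}` such that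
`sup_z P(|xᵀMy - z| ≤ t)² ≤ P(|x_πᵀ M_{π×πᶜ}(y-y')_{πᶜ} + (x-x')_{πᶜ}ᵀ M_{πᶜ×π} y_π + z₀| ≤ 2t)`. -/
theorem decoupling_lemma {Ω : Type*} [MeasureSpace Ω]
    (hprob : IsProbabilityMeasure (ℙ : Measure Ω))
    {n : ℕ} (M : Matrix (Fin n) (Fin n) ℂ)
    (x y x' y' : Ω → Fin n → ℂ)
    (hx : ∀ i, Measurable fun ω => x ω i) (hy : ∀ i, Measurable fun ω => y ω i)
    (hx' : ∀ i, Measurable fun ω => x' ω i) (hy' : ∀ i, Measurable fun ω => y' ω i)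
    (hindep : iIndepFun (fun i => fun ω => (x ω i, y ω i)) ℙ)
    (hcopy_indep : IndepFun (fun ω => (x ω, y ω)) (fun ω => (x' ω, y' ω)) ℙ)
    (hcopy_dist : IdentDistrib (fun ω => (x ω, y ω)) (fun ω => (x' ω, y' ω)) ℙ ℙ) :
    ∀ (π : Finset (Fin n)) (t : ℝ), 0 ≤ t →
      ∃ F : (Fin n → ℂ) → (Fin n → ℂ) → (Fin n → ℂ) → (Fin n → ℂ) → ℂ,
        ∀ z : ℂ,
          (ℙ {ω | ‖(x ω) ⬝ᵥ (M.mulVec (y ω)) - z‖ ≤ t}).toReal ^ 2 ≤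
            (ℙ {ω |
              ‖(∑ i ∈ π, ∑ j ∈ πᶜ, x ω i * M i j * (y ω j - y' ω j)) +
                (∑ i ∈ πᶜ, ∑ j ∈ π, (x ω i - x' ω i) * M i j * y ω j) +
                F (fun i => if i ∈ π then 0 else x ω i)
                  (fun i => if i ∈ π then 0 else y ω i)
                  (fun i => if i ∈ π then 0 else x' ω i)
                  (fun i => if i ∈ π then 0 else y' ω i)‖ ≤ 2 * t}).toReal := by
  haveI := hprob
  intro π t ht
  classical
  refine ⟨fun a b a' b' => ∑ i ∈ πᶜ, ∑ j ∈ πᶜ, (a i * M i j * b j - a' i * M i j * b' j),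
    fun z => ?_⟩
  -- basic objects
  set α := ℂ × ℂ
  -- reconstruction
  let recon : (π → α) → ((πᶜ : Finset (Fin n)) → α) → (Fin n → α) := fun u v i =>
    if h : i ∈ π then u ⟨i, h⟩ else v ⟨i, Finset.mem_compl.mpr h⟩
  let A : Ω → (π → α) := fun ω i => (x ω i, y ω i)
  let B : Ω → ((πᶜ : Finset (Fin n)) → α) := fun ω i => (x ω i, y ω i)
  let B' : Ω → ((πᶜ : Finset (Fin n)) → α) := fun ω i => (x' ω i, y' ω i)
  have hA : Measurable A := measurable_pi_lambda _ fun i => (hx i).prodMk (hy i)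
  have hB : Measurable B := measurable_pi_lambda _ fun i => (hx i).prodMk (hy i)
  have hB' : Measurable B' := measurable_pi_lambda _ fun i => (hx' i).prodMk (hy' i)
  -- the statistic
  let f : (π → α) × ((πᶜ : Finset (Fin n)) → α) → ℂ := fun p =>
    ∑ i, ∑ j, (recon p.1 p.2 i).1 * M i j * (recon p.1 p.2 j).2
  have hr : ∀ i, Measurable (fun p : (π → α) × ((πᶜ : Finset (Fin n)) → α)
      => recon p.1 p.2 i) := by
    intro i
    by_cases h : i ∈ π
    · simp only [recon, dif_pos h]
      exact (measurable_pi_apply _).comp measurable_fst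
    · simp only [recon, dif_neg h]
      exact (measurable_pi_apply _).comp measurable_snd
  have hf : Measurable f := by
    apply Finset.measurable_sum
    intro i _
    apply Finset.measurable_sum
    intro j _
    exact (((hr i).fst.mul measurable_const).mul (hr j).snd)
  -- events
  set E : Set ((π → α) × ((πᶜ : Finset (Fin n)) → α)) := {p | ‖f p - z‖ ≤ t} with hE_def
  have hE : MeasurableSet E := by
    have : E = f ⁻¹' (Metric.closedBall z t) := by
      ext p; simp [hE_def, Metric.mem_closedBall, dist_eq_norm]
    rw [this]
    exact hf measurableSet_closedBall
  -- independence facts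
  have hmeasf : ∀ i, Measurable (fun ω => (x ω i, y ω i)) := fun i => (hx i).prodMk (hy i)
  have h1 : IndepFun A B ℙ := hindep.indepFun_finset π πᶜ disjoint_compl_right hmeasf
  -- restriction maps
  let φ : (Fin n → ℂ) × (Fin n → ℂ) → ((πᶜ : Finset (Fin n)) → α) := fun p i => (p.1 i, p.2 i)
  let ψ : (Fin n → ℂ) × (Fin n → ℂ) → (π → α) × ((πᶜ : Finset (Fin n)) → α) :=
    fun p => (fun i => (p.1 i, p.2 i), fun i => (p.1 i, p.2 i))
  have hφ : Measurable φ := measurable_pi_lambda _ fun i =>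
    ((measurable_pi_apply _).comp measurable_fst).prodMk ((measurable_pi_apply _).comp measurable_snd)
  have hψ : Measurable ψ := by
    refine Measurable.prodMk ?_ ?_ <;>
      exact measurable_pi_lambda _ fun i =>
        ((measurable_pi_apply _).comp measurable_fst).prodMk
          ((measurable_pi_apply _).comp measurable_snd)
  have h2 : IndepFun (fun ω => (A ω, B ω)) B' ℙ := hcopy_indep.comp hψ hφ
  have h3 : IdentDistrib B B' ℙ ℙ := hcopy_dist.comp hφ
  have key := key_decouple A B B' hA hB hB' h1 h2 h3 hE
  -- identify the events
  have hrecAB : ∀ ω i, recon (A ω) (B ω) i = (x ω i, y ω i) := by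
    intro ω i
    by_cases h : i ∈ π <;> simp [recon, h, A, B]
  have hrecAB' : ∀ ω i, recon (A ω) (B' ω) i
      = (if i ∈ π then x ω i else x' ω i, if i ∈ π then y ω i else y' ω i) := by
    intro ω i
    by_cases h : i ∈ π <;> simp [recon, h, A, B']
  have hdot : ∀ (u v : Fin n → ℂ), u ⬝ᵥ M.mulVec v = ∑ i, ∑ j, u i * M i j * v j := by
    intro u v
    simp [dotProduct, mulVec, Finset.mul_sum, mul_assoc]
  have hSA : ∀ ω, f (A ω, B ω) = (x ω) ⬝ᵥ (M.mulVec (y ω)) := by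
    intro ω
    rw [hdot]
    refine Finset.sum_congr rfl fun i _ => Finset.sum_congr rfl fun j _ => ?_
    rw [hrecAB, hrecAB]
  have hSA' : ∀ ω, f (A ω, B' ω)
      = ∑ i, ∑ j, (if i ∈ π then x ω i else x' ω i) * M i j *
          (if j ∈ π then y ω j else y' ω j) := by
    intro ω
    refine Finset.sum_congr rfl fun i _ => Finset.sum_congr rfl fun j _ => ?_
    rw [hrecAB', hrecAB']
  -- the algebraic identity
  have halg : ∀ ω,
      (∑ i ∈ π, ∑ j ∈ πᶜ, x ω i * M i j * (y ω j - y' ω j)) +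
        (∑ i ∈ πᶜ, ∑ j ∈ π, (x ω i - x' ω i) * M i j * y ω j) +
        (∑ i ∈ πᶜ, ∑ j ∈ πᶜ,
          ((fun i => if i ∈ π then 0 else x ω i) i * M i j *
              (fun i => if i ∈ π then 0 else y ω i) j -
            (fun i => if i ∈ π then 0 else x' ω i) i * M i j *
              (fun i => if i ∈ π then 0 else y' ω i) j)) =
      f (A ω, B ω) - f (A ω, B' ω) := by
    intro ω
    rw [hSA, hSA', hdot]
    have hF : (∑ i ∈ πᶜ, ∑ j ∈ πᶜ,
        ((fun i => if i ∈ π then 0 else x ω i) i * M i j *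
            (fun i => if i ∈ π then 0 else y ω i) j -
          (fun i => if i ∈ π then 0 else x' ω i) i * M i j *
            (fun i => if i ∈ π then 0 else y' ω i) j)) =
        ∑ i ∈ πᶜ, ∑ j ∈ πᶜ, (x ω i * M i j * y ω j - x' ω i * M i j * y' ω j) :=
      Finset.sum_congr rfl fun i hi => Finset.sum_congr rfl fun j hj => by
        simp [Finset.mem_compl.mp hi, Finset.mem_compl.mp hj]
    rw [hF]
    have hsplit : ∀ u v : Fin n → ℂ, (∑ i, ∑ j, u i * M i j * v j)
        = (∑ i ∈ π, ∑ j ∈ π, u i * M i j * v j) + (∑ i ∈ π, ∑ j ∈ πᶜ, u i * M i j * v j)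
          + ((∑ i ∈ πᶜ, ∑ j ∈ π, u i * M i j * v j)
            + (∑ i ∈ πᶜ, ∑ j ∈ πᶜ, u i * M i j * v j)) := by
      intro u v
      rw [← Finset.sum_add_distrib, ← Finset.sum_add_distrib,
        ← Finset.sum_add_sum_compl π (fun i => ∑ j, u i * M i j * v j)]
      congr 1 <;> exact Finset.sum_congr rfl fun i _ =>
        (Finset.sum_add_sum_compl π (fun j => u i * M i j * v j)).symm
    rw [hsplit, hsplit]
    have e1 : ∑ i ∈ π, ∑ j ∈ π,
        (if i ∈ π then x ω i else x' ω i) * M i j * (if j ∈ π then y ω j else y' ω j)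
        = ∑ i ∈ π, ∑ j ∈ π, x ω i * M i j * y ω j :=
      Finset.sum_congr rfl fun i hi => Finset.sum_congr rfl fun j hj => by simp [hi, hj]
    have e2 : ∑ i ∈ π, ∑ j ∈ πᶜ,
        (if i ∈ π then x ω i else x' ω i) * M i j * (if j ∈ π then y ω j else y' ω j)
        = ∑ i ∈ π, ∑ j ∈ πᶜ, x ω i * M i j * y' ω j :=
      Finset.sum_congr rfl fun i hi => Finset.sum_congr rfl fun j hj => by
        simp [hi, Finset.mem_compl.mp hj]
    have e3 : ∑ i ∈ πᶜ, ∑ j ∈ π,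
        (if i ∈ π then x ω i else x' ω i) * M i j * (if j ∈ π then y ω j else y' ω j)
        = ∑ i ∈ πᶜ, ∑ j ∈ π, x' ω i * M i j * y ω j :=
      Finset.sum_congr rfl fun i hi => Finset.sum_congr rfl fun j hj => by
        simp [hj, Finset.mem_compl.mp hi]
    have e4 : ∑ i ∈ πᶜ, ∑ j ∈ πᶜ,
        (if i ∈ π then x ω i else x' ω i) * M i j * (if j ∈ π then y ω j else y' ω j)
        = ∑ i ∈ πᶜ, ∑ j ∈ πᶜ, x' ω i * M i j * y' ω j :=
      Finset.sum_congr rfl fun i hi => Finset.sum_congr rfl fun j hj => by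
        simp [Finset.mem_compl.mp hi, Finset.mem_compl.mp hj]
    rw [e1, e2, e3, e4]
    simp only [mul_sub, sub_mul, Finset.sum_sub_distrib]
    ring
  -- inclusion of events
  have hincl : ({ω | (A ω, B ω) ∈ E} ∩ {ω | (A ω, B' ω) ∈ E}) ⊆
      {ω : Ω | ‖(∑ i ∈ π, ∑ j ∈ πᶜ, x ω i * M i j * (y ω j - y' ω j)) +
        (∑ i ∈ πᶜ, ∑ j ∈ π, (x ω i - x' ω i) * M i j * y ω j) +
        (∑ i ∈ πᶜ, ∑ j ∈ πᶜ,
          ((fun i => if i ∈ π then 0 else x ω i) i * M i j *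
              (fun i => if i ∈ π then 0 else y ω i) j -
            (fun i => if i ∈ π then 0 else x' ω i) i * M i j *
              (fun i => if i ∈ π then 0 else y' ω i) j))‖ ≤ 2 * t} := by
    rintro ω ⟨h₁, h₂⟩
    simp only [Set.mem_setOf_eq, hE_def] at h₁ h₂ ⊢
    rw [halg]
    calc ‖f (A ω, B ω) - f (A ω, B' ω)‖
        = ‖(f (A ω, B ω) - z) - (f (A ω, B' ω) - z)‖ := by ring_nf
      _ ≤ ‖f (A ω, B ω) - z‖ + ‖f (A ω, B' ω) - z‖ := norm_sub_le _ _
      _ ≤ 2 * t := by linarith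
  -- the LHS event coincides
  have hLev : {ω : Ω | ‖(x ω) ⬝ᵥ (M.mulVec (y ω)) - z‖ ≤ t} = {ω | (A ω, B ω) ∈ E} := by
    ext ω
    simp only [Set.mem_setOf_eq, hE_def, hSA ω]
  -- conclude
  have hfin : ℙ {ω : Ω | ‖(∑ i ∈ π, ∑ j ∈ πᶜ, x ω i * M i j * (y ω j - y' ω j)) +
        (∑ i ∈ πᶜ, ∑ j ∈ π, (x ω i - x' ω i) * M i j * y ω j) +
        (∑ i ∈ πᶜ, ∑ j ∈ πᶜ,
          ((fun i => if i ∈ π then 0 else x ω i) i * M i j *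
              (fun i => if i ∈ π then 0 else y ω i) j -
            (fun i => if i ∈ π then 0 else x' ω i) i * M i j *
              (fun i => if i ∈ π then 0 else y' ω i) j))‖ ≤ 2 * t} ≠ ⊤ :=
    measure_ne_top _ _
  rw [← ENNReal.toReal_pow]
  refine ENNReal.toReal_mono hfin ?_
  rw [hLev]
  exact key.trans ((measure_mono hincl).trans le_rfl)
end
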